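/- Fix T > 0. Let θ, η : [0,T] → ℝ be continuously differentiable with η(t) > 0 for all t. Let η̄ = min_{t∈[0,T]} η(t) and let θ̄ > 0 be a constant with θ̄ ≥ −θ'(t) for all t ∈ [0,T]; set γ = θ̄/(2η̄). If √γ·T < π, then for every continuously differentiable φ : [0,T] → ℝ with φ(0) = φ(T) = 0 and φ not identically zero, ∫₀ᵀ θ(t)φ(t)φ'(t) dt < ∫₀ᵀ η(t)·φ'(t)² dt. -/

import Mathlib

open Set MeasureTheory Real

set_option maxHeartbeats 1000000 in
/-- Let `η̄ = min η` on `[0,T]`, `θ̄ > 0` with `θ̄ ≥ −θ'` on `[0,T]`, and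
`γ = θ̄/(2η̄)`. If `√γ · T < π`, then for every continuously differentiable `φ` vanishing at
`0` and `T` and not identically zero, `∫₀ᵀ θ φ φ' < ∫₀ᵀ η (φ')²`. -/
theorem stmt12 (T : ℝ) (hT : 0 < T)
    (θ η θ' η' : ℝ → ℝ)
    (hθ : ∀ t ∈ Set.Icc 0 T, HasDerivAt θ (θ' t) t)
    (hθ'c : ContinuousOn θ' (Set.Icc 0 T))
    (hη : ∀ t ∈ Set.Icc 0 T, HasDerivAt η (η' t) t)
    (hη'c : ContinuousOn η' (Set.Icc 0 T))
    (hηpos : ∀ t ∈ Set.Icc 0 T, 0 < η t)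
    (ηbar θbar : ℝ)
    (hηbar : IsLeast (η '' Set.Icc 0 T) ηbar)
    (hθbar : 0 < θbar)
    (hθbar' : ∀ t ∈ Set.Icc 0 T, -θ' t ≤ θbar)
    (hγ : Real.sqrt (θbar / (2 * ηbar)) * T < Real.pi)
    (φ φ' : ℝ → ℝ)
    (hφ : ∀ t ∈ Set.Icc 0 T, HasDerivAt φ (φ' t) t)
    (hφ'c : ContinuousOn φ' (Set.Icc 0 T))
    (hφ0 : φ 0 = 0) (hφT : φ T = 0)
    (hφne : ∃ t ∈ Set.Icc 0 T, φ t ≠ 0) :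
    (∫ t in (0:ℝ)..T, θ t * φ t * φ' t) < ∫ t in (0:ℝ)..T, η t * (φ' t) ^ 2 := by
  have huIcc : Set.uIcc (0:ℝ) T = Set.Icc 0 T := Set.uIcc_of_le hT.le
  obtain ⟨⟨t₁, ht₁, ht₁e⟩, hηlb⟩ := hηbar
  have hηbarpos : 0 < ηbar := ht₁e ▸ hηpos t₁ ht₁
  set γ : ℝ := θbar / (2 * ηbar) with hγdef
  have hγpos : 0 < γ := div_pos hθbar (by linarith)
  have hπT : Real.sqrt γ < Real.pi / T := (lt_div_iff₀ hT).mpr hγ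
  set ω : ℝ := (Real.sqrt γ + Real.pi / T) / 2 with hωdef
  have hsqrtnn : 0 ≤ Real.sqrt γ := Real.sqrt_nonneg γ
  have hπTpos : 0 < Real.pi / T := div_pos Real.pi_pos hT
  have hωpos : 0 < ω := by rw [hωdef]; linarith
  have h1 : Real.sqrt γ < ω := by rw [hωdef]; linarith
  have h2 : ω < Real.pi / T := by rw [hωdef]; linarith
  have hγω : γ < ω ^ 2 := by
    have hs : Real.sqrt γ ^ 2 = γ := Real.sq_sqrt hγpos.le
    nlinarith
  have hωT : ω * T < Real.pi := (lt_div_iff₀ hT).mp h2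
  set δ : ℝ := (Real.pi - ω * T) / 2 with hδdef
  have hδpos : 0 < δ := by rw [hδdef]; linarith
  have hub : ω * T + δ < Real.pi := by rw [hδdef]; linarith
  have hsin : ∀ t ∈ Set.Icc (0:ℝ) T, 0 < Real.sin (ω * t + δ) := by
    intro t ht
    apply Real.sin_pos_of_pos_of_lt_pi
    · have : 0 ≤ ω * t := mul_nonneg hωpos.le ht.1
      linarith
    · have : ω * t ≤ ω * T := mul_le_mul_of_nonneg_left ht.2 hωpos.le
      linarith
  set ψ : ℝ → ℝ := fun t => ω * Real.cos (ω * t + δ) / Real.sin (ω * t + δ) with hψdef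
  set ψ' : ℝ → ℝ := fun t => -(ω ^ 2) / Real.sin (ω * t + δ) ^ 2 with hψ'def
  -- continuity facts
  have hφc : ContinuousOn φ (Set.Icc 0 T) :=
    fun t ht => (hφ t ht).continuousAt.continuousWithinAt
  have hθc : ContinuousOn θ (Set.Icc 0 T) :=
    fun t ht => (hθ t ht).continuousAt.continuousWithinAt
  have hηc : ContinuousOn η (Set.Icc 0 T) :=
    fun t ht => (hη t ht).continuousAt.continuousWithinAt
  have hlin : Continuous (fun t : ℝ => ω * t + δ) :=
    (continuous_const.mul continuous_id).add continuous_const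
  have hsc : Continuous (fun t : ℝ => Real.sin (ω * t + δ)) :=
    Real.continuous_sin.comp hlin
  have hcc : Continuous (fun t : ℝ => Real.cos (ω * t + δ)) :=
    Real.continuous_cos.comp hlin
  have hψc : ContinuousOn ψ (Set.Icc 0 T) := by
    apply ContinuousOn.div
    · exact (continuous_const.mul hcc).continuousOn
    · exact hsc.continuousOn
    · exact fun t ht => (hsin t ht).ne'
  have hψ'c : ContinuousOn ψ' (Set.Icc 0 T) := by
    apply ContinuousOn.div continuousOn_const (hsc.pow 2).continuousOn
    exact fun t ht => (pow_ne_zero 2 (hsin t ht).ne')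
  -- integrability helper
  have hci : ∀ {f : ℝ → ℝ}, ContinuousOn f (Set.Icc 0 T) → IntervalIntegrable f volume 0 T := by
    intro f hf
    apply ContinuousOn.intervalIntegrable
    rwa [huIcc]
  -- general integration by parts against φ φ'
  have hibp : ∀ (u u' : ℝ → ℝ), (∀ t ∈ Set.Icc 0 T, HasDerivAt u (u' t) t) →
      ContinuousOn u' (Set.Icc 0 T) →
      (∫ t in (0:ℝ)..T, u t * (φ t * φ' t)) = -∫ t in (0:ℝ)..T, u' t * (φ t ^ 2 / 2) := by
    intro u u' hu hu'c
    have hv : ∀ t ∈ Set.uIcc (0:ℝ) T, HasDerivAt (fun s => φ s ^ 2 / 2) (φ t * φ' t) t := by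
      intro t ht
      rw [huIcc] at ht
      have h := ((hφ t ht).pow 2).div_const 2
      refine h.congr_deriv ?_
      ring
    have key := intervalIntegral.integral_mul_deriv_eq_deriv_mul
      (u := u) (v := fun s => φ s ^ 2 / 2) (u' := u') (v' := fun t => φ t * φ' t)
      (fun t ht => hu t (huIcc ▸ ht)) hv (hci hu'c)
      (hci (hφc.mul hφ'c))
    rw [key]
    simp [hφ0, hφT]
  -- derivative of ψ
  have hψd : ∀ t ∈ Set.Icc (0:ℝ) T, HasDerivAt ψ (ψ' t) t := by
    intro t ht
    have hs := hsin t ht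
    have hu : HasDerivAt (fun s : ℝ => ω * s + δ) ω t := by
      simpa using ((hasDerivAt_id t).const_mul ω).add_const δ
    have hcos : HasDerivAt (fun s => Real.cos (ω * s + δ)) (-Real.sin (ω * t + δ) * ω) t :=
      (Real.hasDerivAt_cos _).comp t hu
    have hsinD : HasDerivAt (fun s => Real.sin (ω * s + δ)) (Real.cos (ω * t + δ) * ω) t :=
      (Real.hasDerivAt_sin _).comp t hu
    have hnum : HasDerivAt (fun s => ω * Real.cos (ω * s + δ))
        (ω * (-Real.sin (ω * t + δ) * ω)) t := hcos.const_mul ω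
    have hdiv := hnum.div hsinD hs.ne'
    refine hdiv.congr_deriv ?_
    symm
    rw [hψ'def]
    have hpy := Real.sin_sq_add_cos_sq (ω * t + δ)
    field_simp
    linear_combination hpy
  -- abbreviations
  set A : ℝ := ∫ t in (0:ℝ)..T, (φ' t) ^ 2 with hA
  set B : ℝ := ∫ t in (0:ℝ)..T, (φ t) ^ 2 with hB
  set C : ℝ := ∫ t in (0:ℝ)..T, (ψ t) ^ 2 * (φ t) ^ 2 with hC
  -- integrability of the pieces
  have iφ2 : IntervalIntegrable (fun t => (φ t) ^ 2) volume 0 T := hci (hφc.pow 2)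
  have iφ'2 : IntervalIntegrable (fun t => (φ' t) ^ 2) volume 0 T := hci (hφ'c.pow 2)
  have iψφφ' : IntervalIntegrable (fun t => ψ t * (φ t * φ' t)) volume 0 T :=
    hci (hψc.mul (hφc.mul hφ'c))
  have iψ2φ2 : IntervalIntegrable (fun t => (ψ t) ^ 2 * (φ t) ^ 2) volume 0 T :=
    hci ((hψc.pow 2).mul (hφc.pow 2))
  -- step 1 : value of 2 ∫ ψ φ φ'
  have hψint : (2:ℝ) * ∫ t in (0:ℝ)..T, ψ t * (φ t * φ' t) = ω ^ 2 * B + C := by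
    have h1' := hibp ψ ψ' hψd hψ'c
    have h2' : (∫ t in (0:ℝ)..T, ψ' t * (φ t ^ 2 / 2)) =
        -∫ t in (0:ℝ)..T, (ω ^ 2 * (φ t) ^ 2 + (ψ t) ^ 2 * (φ t) ^ 2) / 2 := by
      rw [← intervalIntegral.integral_neg]
      apply intervalIntegral.integral_congr
      intro t ht
      rw [huIcc] at ht
      have hs := (hsin t ht).ne'
      have hpy := Real.sin_sq_add_cos_sq (ω * t + δ)
      simp only [hψ'def, hψdef]
      field_simp
      linear_combination (φ t ^ 2) * hpy
    have h3' : (∫ t in (0:ℝ)..T, (ω ^ 2 * (φ t) ^ 2 + (ψ t) ^ 2 * (φ t) ^ 2) / 2)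
        = (ω ^ 2 * B + C) / 2 := by
      rw [intervalIntegral.integral_div, intervalIntegral.integral_add
        (iφ2.const_mul _) iψ2φ2, intervalIntegral.integral_const_mul]
    rw [h1', h2', neg_neg, h3']
    ring
  -- step 2 : expansion of the square, Wirtinger inequality
  have hWirt : ω ^ 2 * B ≤ A := by
    have hnn : (0:ℝ) ≤ ∫ t in (0:ℝ)..T, (φ' t - ψ t * φ t) ^ 2 :=
      intervalIntegral.integral_nonneg hT.le fun t _ => sq_nonneg _
    have hexp : (∫ t in (0:ℝ)..T, (φ' t - ψ t * φ t) ^ 2)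
        = A - 2 * (∫ t in (0:ℝ)..T, ψ t * (φ t * φ' t)) + C := by
      have e1 : (∫ t in (0:ℝ)..T, (φ' t - ψ t * φ t) ^ 2)
          = ∫ t in (0:ℝ)..T,
            (((φ' t) ^ 2 - 2 * (ψ t * (φ t * φ' t))) + (ψ t) ^ 2 * (φ t) ^ 2) := by
        apply intervalIntegral.integral_congr
        intro t _
        ring
      rw [e1, intervalIntegral.integral_add (iφ'2.sub (iψφφ'.const_mul 2)) iψ2φ2,
        intervalIntegral.integral_sub iφ'2 (iψφφ'.const_mul 2),
        intervalIntegral.integral_const_mul]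
    rw [hexp, hψint] at hnn
    linarith
  -- step 3 : B > 0
  have hBpos : 0 < B := by
    obtain ⟨t₀, ht₀, hφt₀⟩ := hφne
    have ht₀0 : t₀ ≠ 0 := fun h => hφt₀ (h ▸ hφ0)
    have ht₀T : t₀ ≠ T := fun h => hφt₀ (h ▸ hφT)
    have ht₀mem : t₀ ∈ Set.Ioo (0:ℝ) T :=
      ⟨lt_of_le_of_ne ht₀.1 (Ne.symm ht₀0), lt_of_le_of_ne ht₀.2 ht₀T⟩
    have hca : ContinuousAt φ t₀ := (hφ t₀ ht₀).continuousAt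
    have hev : ∀ᶠ t in nhds t₀, φ t ≠ 0 := hca.eventually_ne hφt₀
    obtain ⟨ε, hε, hball⟩ := Metric.eventually_nhds_iff.mp hev
    set a : ℝ := max (t₀ - ε) 0 with ha
    set b : ℝ := min (t₀ + ε) T with hb
    have hab : a < t₀ := max_lt (by linarith) ht₀mem.1
    have hbb : t₀ < b := lt_min (by linarith) ht₀mem.2
    have hsub : Set.Ioo a b ⊆ Function.support (fun t => (φ t) ^ 2) ∩ Set.Ioc 0 T := by
      intro x hx
      constructor
      · have hd : dist x t₀ < ε := by
          rw [Real.dist_eq, abs_lt]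
          constructor
          · have := hx.1; have := le_max_left (t₀ - ε) 0; simp only [ha] at hx; linarith [hx.1, le_max_left (t₀ - ε) 0]
          · have := hx.2; have := min_le_left (t₀ + ε) T; simp only [hb] at hx; linarith [hx.2, min_le_left (t₀ + ε) T]
        exact pow_ne_zero 2 (hball hd)
      · constructor
        · exact lt_of_le_of_lt (le_max_right _ _) hx.1
        · exact le_of_lt (lt_of_lt_of_le hx.2 (min_le_right _ _))
    have hmeas : 0 < volume (Function.support (fun t => (φ t) ^ 2) ∩ Set.Ioc 0 T) := by
      refine lt_of_lt_of_le ?_ (measure_mono hsub)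
      rw [Real.volume_Ioo]
      exact ENNReal.ofReal_pos.mpr (by linarith)
    have := (intervalIntegral.integral_pos_iff_support_of_nonneg_ae
      (f := fun t => (φ t) ^ 2) (μ := volume) (a := 0) (b := T)
      (Filter.Eventually.of_forall fun t => sq_nonneg _) iφ2).mpr ⟨hT, hmeas⟩
    exact this
  -- step 4 : transform the LHS with integration by parts
  have hθint : (∫ t in (0:ℝ)..T, θ t * φ t * φ' t)
      = -∫ t in (0:ℝ)..T, θ' t * (φ t ^ 2 / 2) := by
    rw [← hibp θ θ' hθ hθ'c]
    apply intervalIntegral.integral_congr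
    intro t _
    ring
  -- step 5 : lower bound for ∫ θ' φ²/2
  have hθ'lb : -θbar * (B / 2) ≤ ∫ t in (0:ℝ)..T, θ' t * (φ t ^ 2 / 2) := by
    have hmono : (∫ t in (0:ℝ)..T, -θbar * (φ t ^ 2 / 2))
        ≤ ∫ t in (0:ℝ)..T, θ' t * (φ t ^ 2 / 2) := by
      apply intervalIntegral.integral_mono_on hT.le
        (hci ((continuousOn_const.mul ((hφc.pow 2).div_const 2))))
        (hci (hθ'c.mul ((hφc.pow 2).div_const 2)))
      intro t ht
      have h1' : -θbar ≤ θ' t := by linarith [hθbar' t ht]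
      have h2' : (0:ℝ) ≤ φ t ^ 2 / 2 := by positivity
      exact mul_le_mul_of_nonneg_right h1' h2'
    calc -θbar * (B / 2) = ∫ t in (0:ℝ)..T, -θbar * (φ t ^ 2 / 2) := by
          rw [intervalIntegral.integral_const_mul]
          rw [show (∫ t in (0:ℝ)..T, φ t ^ 2 / 2) = B / 2 from
            intervalIntegral.integral_div 2 _]
      _ ≤ _ := hmono
  -- step 6 : lower bound for the RHS
  have hRHS : ηbar * A ≤ ∫ t in (0:ℝ)..T, η t * (φ' t) ^ 2 := by
    have hmono : (∫ t in (0:ℝ)..T, ηbar * (φ' t) ^ 2)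
        ≤ ∫ t in (0:ℝ)..T, η t * (φ' t) ^ 2 := by
      apply intervalIntegral.integral_mono_on hT.le (iφ'2.const_mul _)
        (hci (hηc.mul (hφ'c.pow 2)))
      intro t ht
      exact mul_le_mul_of_nonneg_right (hηlb ⟨t, ht, rfl⟩) (sq_nonneg _)
    rw [intervalIntegral.integral_const_mul] at hmono
    exact hmono
  -- conclusion
  have hlhs : (∫ t in (0:ℝ)..T, θ t * φ t * φ' t) ≤ θbar * (B / 2) := by
    rw [hθint]
    linarith
  have hfinal : θbar * (B / 2) < ηbar * A := by
    have h2η : θbar < 2 * ηbar * ω ^ 2 := by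
      have : γ * (2 * ηbar) < ω ^ 2 * (2 * ηbar) := by nlinarith
      rw [hγdef] at this
      rw [div_mul_cancel₀] at this
      · linarith
      · positivity
    have hA' : ηbar * (ω ^ 2 * B) ≤ ηbar * A :=
      mul_le_mul_of_nonneg_left hWirt hηbarpos.le
    nlinarith
  linarith
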